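/- For every integer n ≥ 1 and every pattern pair p ∈ {(021,210), (021,201)}, the set I_n(p) of inversion sequences of length n avoiding both patterns of p coincides with I_n(021), the set of inversion sequences of length n avoiding 021, and its cardinality equals the large Schröder number: |I_n(p)| = ∑_{k=0}^{n−1} binom(n−1+k, 2k) · C_k, where C_k is the k-th Catalan number. -/

import Mathlib

/-- An inversion sequence of length `n` (0-indexed): `e i ≤ i` for all `i`. -/
def InvSeq {n : ℕ} (e : Fin n → ℕ) : Prop := ∀ i : Fin n, e i ≤ (i : ℕ)

/-- `e` contains the pattern `p` (a word of nonnegative integers): there is a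
strictly increasing choice of positions on which `e` is order-isomorphic to `p`. -/
def Contains {n : ℕ} (e : Fin n → ℕ) (p : List ℕ) : Prop :=
  ∃ s : Fin p.length → Fin n, StrictMono s ∧
    ∀ a b : Fin p.length,
      (p.get a < p.get b ↔ e (s a) < e (s b)) ∧
      (p.get a = p.get b ↔ e (s a) = e (s b))

/-- `e` avoids the pattern `p`. -/
def Avoids {n : ℕ} (e : Fin n → ℕ) (p : List ℕ) : Prop := ¬ Contains e p

/-- The number of zero entries of `e`. -/
def zeroStat {n : ℕ} (e : Fin n → ℕ) : ℕ :=
  (Finset.univ.filter (fun i : Fin n => e i = 0)).card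

/-- The number of distinct positive values among the entries of `e`. -/
def distStat {n : ℕ} (e : Fin n → ℕ) : ℕ :=
  ((Finset.univ.image e).filter (fun v => 0 < v)).card

/-- The number of repeated entries of `e`: `n - dist e`. -/
def repStat {n : ℕ} (e : Fin n → ℕ) : ℕ := n - distStat e

/-- The number of saturated entries of `e` (1-indexed: `e_i = i - 1`). -/
def satuStat {n : ℕ} (e : Fin n → ℕ) : ℕ :=
  (Finset.univ.filter (fun i : Fin n => e i = (i : ℕ))).card

open Finset


open Finset

def bal : ℕ → ℕ → ℕ
  | _, 0 => 1
  | 0, _ + 1 => 0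
  | a + 1, b + 1 => if a + 1 < b + 1 then 0 else bal a (b + 1) + bal (a + 1) b

lemma bal_zero (a : ℕ) : bal a 0 = 1 := by cases a <;> simp [bal]

lemma bal_succ {a b : ℕ} (h : b + 1 ≤ a + 1) :
    bal (a+1) (b+1) = bal a (b+1) + bal (a+1) b := by
  simp [bal, Nat.not_lt.mpr h]

lemma bal_eq_zero {a b : ℕ} (h : a < b) : bal a b = 0 := by
  cases b with
  | zero => omega
  | succ b =>
    cases a with
    | zero => simp [bal]
    | succ a => simp [bal, h]

lemma bal_one (a : ℕ) : bal a 1 = a := by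
  induction a with
  | zero => simp [bal]
  | succ a ih => rw [bal_succ (by omega), ih, bal_zero]

lemma bal_closed_aux : ∀ n a b, a + b = n → 1 ≤ b → b ≤ a →
    bal a b + (a + b).choose (b - 1) = (a + b).choose b := by
  intro n
  induction n using Nat.strong_induction_on with
  | _ n IH =>
    intro a b hn hb hba
    match b, hb with
    | 1, _ =>
      rw [bal_one]
      simp [Nat.choose_one_right]
    | (d+2), _ =>
      obtain ⟨e, rfl⟩ : ∃ e, a = d + 2 + e := ⟨a - (d+2), by omega⟩
      rcases Nat.eq_zero_or_pos e with rfl | he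
      · -- diagonal a = d+2 = b
        have h0 := bal_succ (a := d+1) (b := d+1) (by omega)
        have h1 : bal (d+1) (d+1+1) = 0 := bal_eq_zero (by omega)
        have ih := IH (d+2+(d+1)) (by omega) (d+2) (d+1) (by omega) (by omega) (by omega)
        have p1 := Nat.choose_succ_succ (d+2+(d+1)) d
        have p2 := Nat.choose_succ_succ (d+2+(d+1)) (d+1)
        have psymm : (d+2+(d+1)).choose (d+2) = (d+2+(d+1)).choose (d+1) := by
          have := Nat.choose_symm (n := d+2+(d+1)) (k := d+2) (by omega)
          rw [show d+2+(d+1) - (d+2) = d+1 by omega] at this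
          exact this.symm
        rw [show d+1-1 = d by omega] at ih
        rw [show d+2-1 = d+1 by omega]
        simp only [Nat.succ_eq_add_one] at h0 h1 ih p1 p2 psymm ⊢
        ring_nf at h0 h1 ih p1 p2 psymm ⊢
        omega
      · -- b < a
        obtain ⟨e', rfl⟩ : ∃ e', e = e' + 1 := ⟨e - 1, by omega⟩
        have h0 := bal_succ (a := d+1+(e'+1)) (b := d+1) (by omega)
        have ih1 := IH (d+1+(e'+1)+(d+2)) (by omega) (d+1+(e'+1)) (d+2) (by omega) (by omega) (by omega)
        have ih2 := IH (d+2+(e'+1)+(d+1)) (by omega) (d+2+(e'+1)) (d+1) (by omega) (by omega) (by omega)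
        have p1 := Nat.choose_succ_succ (d+1+(e'+1)+(d+2)) d
        have p2 := Nat.choose_succ_succ (d+1+(e'+1)+(d+2)) (d+1)
        rw [show d+2-1 = d+1 by omega] at ih1
        rw [show d+1-1 = d by omega] at ih2
        rw [show d+2-1 = d+1 by omega]
        simp only [Nat.succ_eq_add_one] at h0 ih1 ih2 p1 p2 ⊢
        ring_nf at h0 ih1 ih2 p1 p2 ⊢
        omega

lemma bal_closed {a b : ℕ} (hb : 1 ≤ b) (hba : b ≤ a) :
    bal a b + (a + b).choose (b - 1) = (a + b).choose b :=
  bal_closed_aux (a+b) a b rfl hb hba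

lemma bal_diag (k : ℕ) : bal k k = catalan k := by
  cases k with
  | zero => simp [bal_zero]
  | succ k =>
    have h := bal_closed (a := k+1) (b := k+1) (by omega) (le_refl _)
    have hsymm : (k+1+(k+1)).choose (k+1-1) = (k+1+(k+1)).choose (k+2) := by
      have := Nat.choose_symm (n := k+1+(k+1)) (k := k+2) (by omega)
      rw [show k+1+(k+1) - (k+2) = k by omega] at this
      rw [show k+1-1 = k by omega]
      exact this
    -- (k+2) * C(2k+2, k+2) = (k+1) * C(2k+2, k+1)
    have hr := Nat.choose_succ_right_eq (k+1+(k+1)) (k+1)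
    -- hr : (2k+2).choose (k+2) * (k+2) = (2k+2).choose (k+1) * (2k+2 - (k+1))
    have hcat := succ_mul_catalan_eq_centralBinom (k+1)
    have hcb : Nat.centralBinom (k+1) = (k+1+(k+1)).choose (k+1) := by
      unfold Nat.centralBinom; congr 1; omega
    -- combine: goal bal (k+1) (k+1) = catalan (k+1)
    -- from h: bal + C(2k+2, k+2) = C(2k+2,k+1)
    -- multiply by (k+2): (k+2) bal + (k+2)C(,k+2) = (k+2)C(,k+1)
    -- (k+2)*C(,k+2) = (k+1)*C(,k+1)  [hr: since 2k+2-(k+1) = k+1]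
    -- so (k+2) bal = C(,k+1) = (k+2)*catalan(k+1)
    rw [hsymm] at h
    have h2 : (k+2) * bal (k+1) (k+1) = (k+2) * catalan (k+1) := by
      have hmul : (k+2) * bal (k+1) (k+1) + (k+2) * (k+1+(k+1)).choose (k+2)
          = (k+2) * (k+1+(k+1)).choose (k+1) := by
        rw [← Nat.mul_add, h]
      have hr' : (k+1+(k+1)).choose (k+2) * (k+2) = (k+1+(k+1)).choose (k+1) * (k+1) := by
        rw [hr]; congr 1; omega
      have hcat' : (k+2) * catalan (k+1) = (k+1+(k+1)).choose (k+1) := by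
        rw [← hcb]; exact hcat
      -- now pure linear arithmetic over atoms
      nlinarith [hmul, hr', hcat']
    exact Nat.eq_of_mul_eq_mul_left (by omega) h2

noncomputable def GG (r h : ℕ) : ℕ := ∑ k ∈ range (r+1), (r+k).choose (2*k+h) * bal (h+k) k

lemma sum_top_zero (f : ℕ → ℕ) (n : ℕ) (h : f n = 0) :
    ∑ k ∈ range (n+1), f k = ∑ k ∈ range n, f k := by
  rw [Finset.sum_range_succ, h, Nat.add_zero]

lemma GG_eq_zero {r h : ℕ} (hrh : r < h) : GG r h = 0 := by
  apply Finset.sum_eq_zero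
  intro k hk
  rw [Nat.choose_eq_zero_of_lt (by omega)]
  ring

lemma GG_zero_zero : GG 0 0 = 1 := by
  simp [GG, bal_zero]

lemma GG_rec_succ (r h : ℕ) :
    GG (r+1) (h+1) = GG (r+1) (h+2) + GG r (h+1) + GG r h := by
  have split1 : GG (r+1) (h+1)
      = (∑ k ∈ range (r+2), (r+k).choose (2*k+(h+1)) * bal (h+1+k) k)
      + (∑ k ∈ range (r+2), (r+k).choose (2*k+h) * bal (h+1+k) k) := by
    rw [GG, ← Finset.sum_add_distrib]
    apply Finset.sum_congr (by norm_num)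
    intro k _
    have hp : (r+1+k).choose (2*k+(h+1)) = (r+k).choose (2*k+(h+1)) + (r+k).choose (2*k+h) := by
      rw [show r+1+k = (r+k)+1 by omega, show 2*k+(h+1) = (2*k+h)+1 by omega]
      rw [Nat.choose_succ_succ]
      simp only [Nat.succ_eq_add_one]
      omega
    rw [hp, Nat.add_mul]
  have s1 : (∑ k ∈ range (r+2), (r+k).choose (2*k+(h+1)) * bal (h+1+k) k) = GG r (h+1) := by
    rw [show r+2 = (r+1)+1 from rfl,
        sum_top_zero (fun k => (r+k).choose (2*k+(h+1)) * bal (h+1+k) k) (r+1) (mul_eq_zero_of_left (Nat.choose_eq_zero_of_lt (by omega)) _)]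
    rfl
  have s2 : (∑ k ∈ range (r+2), (r+k).choose (2*k+h) * bal (h+1+k) k)
      = GG r h + GG (r+1) (h+2) := by
    rw [Finset.sum_range_succ' (fun k => (r+k).choose (2*k+h) * bal (h+1+k) k) (r+1)]
    have e1 : ∀ k, (r+(k+1)).choose (2*(k+1)+h) * bal (h+1+(k+1)) (k+1)
        = (r+(k+1)).choose (2*(k+1)+h) * bal (h+(k+1)) (k+1)
          + (r+1+k).choose (2*k+(h+2)) * bal (h+2+k) k := by
      intro k
      have hb : bal (h+1+(k+1)) (k+1) = bal (h+(k+1)) (k+1) + bal (h+1+(k+1)) k := by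
        have := bal_succ (a := h+k+1) (b := k) (by omega)
        rw [show h+1+(k+1) = h+k+1+1 by omega, show h+(k+1) = h+k+1 by omega]
        exact this
      rw [hb, Nat.mul_add]
      congr 2
      · congr 1 <;> omega
      · congr 1; omega
    rw [Finset.sum_congr rfl (fun k _ => e1 k), Finset.sum_add_distrib]
    have g1 : (∑ k ∈ range (r+1), (r+(k+1)).choose (2*(k+1)+h) * bal (h+(k+1)) (k+1))
          + (r+0).choose (2*0+h) * bal (h+1+0) 0
        = GG r h := by
      rw [sum_top_zero (fun k => (r+(k+1)).choose (2*(k+1)+h) * bal (h+(k+1)) (k+1)) r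
            (mul_eq_zero_of_left (Nat.choose_eq_zero_of_lt (by omega)) _)]
      rw [GG, Finset.sum_range_succ' (fun k => (r+k).choose (2*k+h) * bal (h+k) k) r]
      congr 1
      simp [bal_zero]
    have g2 : (∑ k ∈ range (r+1), (r+1+k).choose (2*k+(h+2)) * bal (h+2+k) k)
        = GG (r+1) (h+2) := by
      rw [GG]
      rw [show r+1+1 = (r+1)+1 from rfl,
          sum_top_zero (fun k => (r+1+k).choose (2*k+(h+2)) * bal ((h+2)+k) k) (r+1)
            (mul_eq_zero_of_left (Nat.choose_eq_zero_of_lt (by omega)) _)]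
    omega
  omega

lemma GG_rec_zero (r : ℕ) : GG (r+1) 0 = GG (r+1) 1 + GG r 0 := by
  have hL : GG (r+1) 0
      = (∑ k ∈ range (r+1), (r+1+(k+1)).choose (2*(k+1)) * bal (k+1) (k+1)) + 1 := by
    rw [GG, Finset.sum_range_succ' (fun k => (r+1+k).choose (2*k+0) * bal (0+k) k) (r+1)]
    congr 1
    · apply Finset.sum_congr rfl
      intro k _
      congr 2 <;> omega
    · simp [bal_zero]
  have hb : ∀ k : ℕ, bal (k+1) (k+1) = bal (1+k) k := by
    intro k
    rcases Nat.eq_zero_or_pos k with rfl | hk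
    · rw [bal_succ (by omega), bal_eq_zero (by omega), bal_zero]
    · rw [bal_succ (by omega), bal_eq_zero (by omega), show 1+k = k+1 by omega]
      omega
  have e1 : ∀ k, (r+1+(k+1)).choose (2*(k+1)) * bal (k+1) (k+1)
      = (r+1+k).choose (2*k+1) * bal (1+k) k
        + (r+(k+1)).choose (2*(k+1)) * bal (k+1) (k+1) := by
    intro k
    have hp : (r+1+(k+1)).choose (2*(k+1)) = (r+1+k).choose (2*k+1) + (r+(k+1)).choose (2*(k+1)) := by
      have h1 := Nat.choose_succ_succ (r+1+k) (2*k+1)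
      simp only [Nat.succ_eq_add_one] at h1
      rw [show r+1+k+1 = r+1+(k+1) by omega, show 2*k+1+1 = 2*(k+1) by omega] at h1
      rw [h1]
      congr 2
      omega
    rw [hp, Nat.add_mul, hb k]
  have hsplit : (∑ k ∈ range (r+1), (r+1+(k+1)).choose (2*(k+1)) * bal (k+1) (k+1))
      = (∑ k ∈ range (r+1), (r+1+k).choose (2*k+1) * bal (1+k) k)
        + (∑ k ∈ range (r+1), (r+(k+1)).choose (2*(k+1)) * bal (k+1) (k+1)) := by
    rw [Finset.sum_congr rfl (fun k _ => e1 k), Finset.sum_add_distrib]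
  have g1 : (∑ k ∈ range (r+1), (r+1+k).choose (2*k+1) * bal (1+k) k) = GG (r+1) 1 := by
    rw [GG]
    rw [show r+1+1 = (r+1)+1 from rfl,
        sum_top_zero (fun k => (r+1+k).choose (2*k+1) * bal (1+k) k) (r+1)
          (mul_eq_zero_of_left (Nat.choose_eq_zero_of_lt (by omega)) _)]
  have g2 : (∑ k ∈ range (r+1), (r+(k+1)).choose (2*(k+1)) * bal (k+1) (k+1)) + 1
      = GG r 0 := by
    rw [GG, Finset.sum_range_succ' (fun k => (r+k).choose (2*k+0) * bal (0+k) k) r]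
    congr 1
    · rw [sum_top_zero (fun k => (r+(k+1)).choose (2*(k+1)) * bal (k+1) (k+1)) r
            (mul_eq_zero_of_left (Nat.choose_eq_zero_of_lt (by omega)) _)]
      apply Finset.sum_congr rfl
      intro k _
      congr 2 <;> omega
    · simp [bal_zero]
  omega

noncomputable def Sg (r t : ℕ) : ℕ := ∑ j ∈ Ico t (r+1), GG r j

lemma Sg_empty {r t : ℕ} (h : r + 1 ≤ t) : Sg r t = 0 := by
  rw [Sg, Finset.Ico_eq_empty (by omega), Finset.sum_empty]

lemma Sg_succ (r t : ℕ) : Sg r t = GG r t + Sg r (t+1) := by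
  rcases le_or_gt t r with h | h
  · rw [Sg, Sg, Finset.sum_eq_sum_Ico_succ_bot (by omega)]
  · rw [Sg_empty (by omega), Sg_empty (by omega), GG_eq_zero h]

lemma G_Sg_aux (r : ℕ) : ∀ d t, r + 2 ≤ t + d → 1 ≤ t →
    GG (r+1) t = Sg r t + Sg r (t-1) := by
  intro d
  induction d with
  | zero =>
    intro t ht h1
    rw [GG_eq_zero (by omega), Sg_empty (by omega), Sg_empty (by omega)]
  | succ d IH =>
    intro t ht h1
    rcases le_or_gt (r+2) (t+d) with hd | hd
    · exact IH t hd h1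
    · obtain ⟨h, rfl⟩ : ∃ h, t = h + 1 := ⟨t - 1, by omega⟩
      have hrec := GG_rec_succ r h
      have hnext : GG (r+1) (h+2) = Sg r (h+2) + Sg r (h+1) := by
        have := IH (h+2) (by omega) (by omega)
        rwa [show h+2-1 = h+1 by omega] at this
      have s1 := Sg_succ r (h+1)
      rw [show h+1+1 = h+2 by omega] at s1
      have s2 := Sg_succ r h
      rw [show h+1-1 = h by omega]
      omega

lemma G_Sg (r t : ℕ) : GG (r+1) t = Sg r t + Sg r (t-1) := by
  rcases Nat.eq_zero_or_pos t with rfl | ht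
  · have h0 := GG_rec_zero r
    have h1 : GG (r+1) 1 = Sg r 1 + Sg r 0 := by
      have := G_Sg_aux r (r+2) 1 (by omega) (by omega)
      rwa [show (1:ℕ)-1 = 0 by omega] at this
    have s0 := Sg_succ r 0
    rw [show (0:ℕ)+1 = 1 by omega] at s0
    rw [show (0:ℕ)-1 = 0 by omega]
    omega
  · exact G_Sg_aux r (r+2) t (by omega) ht

lemma hockey1 (h j : ℕ) : ∑ t ∈ range (j+1), (t+h-1).choose t = (j+h).choose j := by
  cases h with
  | zero =>
    induction j with
    | zero => simp
    | succ j IH =>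
      rw [Finset.sum_range_succ, IH,
        Nat.choose_eq_zero_of_lt (show j+1+0-1 < j+1 by omega)]
      simp
  | succ h =>
    induction j with
    | zero => simp
    | succ j IH =>
      rw [Finset.sum_range_succ, IH]
      have hp := Nat.choose_succ_succ (j+h+1) j
      simp only [Nat.succ_eq_add_one] at hp
      have e1 : (j+1+(h+1)-1).choose (j+1) = (j+h+1).choose (j+1) := by congr 1 <;> omega
      have e2 : (j+(h+1)).choose j = (j+h+1).choose j := by congr 1 <;> omega
      have e3 : (j+1+(h+1)).choose (j+1) = (j+h+1+1).choose (j+1) := by congr 1 <;> omega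
      omega

lemma hockey2 (j h : ℕ) : ∑ u ∈ range (h+1), (j+u).choose j = (j+h+1).choose (j+1) := by
  induction h with
  | zero => simp
  | succ h IH =>
    rw [Finset.sum_range_succ, IH]
    have hp := Nat.choose_succ_succ (j+h+1) j
    simp only [Nat.succ_eq_add_one] at hp
    have e1 : (j+(h+1)).choose j = (j+h+1).choose j := by congr 1 <;> omega
    have e2 : (j+(h+1)+1).choose (j+1) = (j+h+1+1).choose (j+1) := by congr 1 <;> omega
    omega

noncomputable def AA (r h : ℕ) : ℕ := ∑ j ∈ range (r+1), (j+h-1).choose j * GG r j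

lemma swap1 (c : ℕ → ℕ) (r : ℕ) :
    ∑ j ∈ range (r+2), c j * Sg r j
      = ∑ t ∈ range (r+1), (∑ j ∈ range (t+1), c j) * GG r t := by
  calc ∑ j ∈ range (r+2), c j * Sg r j
      = ∑ j ∈ range (r+2), ∑ t ∈ range (r+1), if j ≤ t then c j * GG r t else 0 := by
        refine Finset.sum_congr rfl ?_
        intro j _
        rw [Sg, Finset.mul_sum,
          show Ico j (r+1) = (range (r+1)).filter (fun t => j ≤ t) by
            ext t; simp only [Finset.mem_Ico, Finset.mem_filter, Finset.mem_range]; omega,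
          Finset.sum_filter]
    _ = ∑ t ∈ range (r+1), ∑ j ∈ range (r+2), if j ≤ t then c j * GG r t else 0 :=
        Finset.sum_comm
    _ = ∑ t ∈ range (r+1), (∑ j ∈ range (t+1), c j) * GG r t := by
        refine Finset.sum_congr rfl ?_
        intro t ht
        simp only [Finset.mem_range] at ht
        rw [← Finset.sum_filter,
          show (range (r+2)).filter (fun j => j ≤ t) = range (t+1) by
            ext j; simp only [Finset.mem_filter, Finset.mem_range]; omega,
          Finset.sum_mul]

lemma swap2 (c : ℕ → ℕ) (r : ℕ) :
    ∑ j ∈ range (r+2), c j * Sg r (j-1)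
      = ∑ t ∈ range (r+1), (∑ j ∈ range (t+2), c j) * GG r t := by
  calc ∑ j ∈ range (r+2), c j * Sg r (j-1)
      = ∑ j ∈ range (r+2), ∑ t ∈ range (r+1), if j ≤ t+1 then c j * GG r t else 0 := by
        refine Finset.sum_congr rfl ?_
        intro j _
        rw [Sg, Finset.mul_sum,
          show Ico (j-1) (r+1) = (range (r+1)).filter (fun t => j ≤ t+1) by
            ext t; simp only [Finset.mem_Ico, Finset.mem_filter, Finset.mem_range]; omega,
          Finset.sum_filter]
    _ = ∑ t ∈ range (r+1), ∑ j ∈ range (r+2), if j ≤ t+1 then c j * GG r t else 0 :=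
        Finset.sum_comm
    _ = ∑ t ∈ range (r+1), (∑ j ∈ range (t+2), c j) * GG r t := by
        refine Finset.sum_congr rfl ?_
        intro t ht
        simp only [Finset.mem_range] at ht
        rw [← Finset.sum_filter,
          show (range (r+2)).filter (fun j => j ≤ t+1) = range (t+2) by
            ext j; simp only [Finset.mem_filter, Finset.mem_range]; omega,
          Finset.sum_mul]

lemma AA_rec (r h : ℕ) :
    AA (r+1) h = AA r (h+1) + ∑ u ∈ range (h+1), AA r (u+1) := by
  have step1 : AA (r+1) h
      = (∑ j ∈ range (r+2), (j+h-1).choose j * Sg r j)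
      + (∑ j ∈ range (r+2), (j+h-1).choose j * Sg r (j-1)) := by
    rw [AA, ← Finset.sum_add_distrib]
    refine Finset.sum_congr (by norm_num) ?_
    intro j _
    rw [G_Sg, Nat.mul_add]
  have sw1 : (∑ j ∈ range (r+2), (j+h-1).choose j * Sg r j) = AA r (h+1) := by
    rw [swap1, AA]
    refine Finset.sum_congr rfl ?_
    intro t _
    rw [hockey1 h t]
    congr 2 <;> omega
  have sw2 : (∑ j ∈ range (r+2), (j+h-1).choose j * Sg r (j-1))
      = ∑ t ∈ range (r+1), (t+1+h).choose (t+1) * GG r t := by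
    rw [swap2]
    refine Finset.sum_congr rfl ?_
    intro t _
    rw [hockey1 h (t+1)]
  have rhs2 : (∑ u ∈ range (h+1), AA r (u+1))
      = ∑ t ∈ range (r+1), (t+1+h).choose (t+1) * GG r t := by
    calc ∑ u ∈ range (h+1), AA r (u+1)
        = ∑ u ∈ range (h+1), ∑ t ∈ range (r+1), (t+u).choose t * GG r t := by
          refine Finset.sum_congr rfl ?_
          intro u _
          rw [AA]
          refine Finset.sum_congr rfl ?_
          intro t _
          congr 2 <;> omega
      _ = ∑ t ∈ range (r+1), ∑ u ∈ range (h+1), (t+u).choose t * GG r t := Finset.sum_comm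
      _ = ∑ t ∈ range (r+1), (t+1+h).choose (t+1) * GG r t := by
          refine Finset.sum_congr rfl ?_
          intro t _
          rw [← Finset.sum_mul]
          congr 1
          have := hockey2 t h
          rw [this]
          congr 1 <;> omega
  omega

lemma AA_zero (r : ℕ) : AA r 0 = GG r 0 := by
  rw [AA]
  rw [Finset.sum_eq_single_of_mem 0 (by simp)]
  · simp
  · intro j _ hj
    rw [Nat.choose_eq_zero_of_lt (show j+0-1 < j by omega)]
    ring

lemma AA_base (h : ℕ) : AA 0 h = 1 := by
  rw [AA]
  simp [GG_zero_zero]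

lemma AA_final (m : ℕ) : AA m 0 = ∑ k ∈ range (m+1), (m+k).choose (2*k) * catalan k := by
  rw [AA_zero, GG]
  refine Finset.sum_congr rfl ?_
  intro k _
  rw [show 2*k+0 = 2*k by omega, show 0+k = k by omega, bal_diag]

/-- The local condition on the tail of an inversion sequence. -/
def Cond (i b : ℕ) (l : List ℕ) : Prop :=
  ∀ j (h : j < l.length), l[j] ≤ i + j ∧
    (l[j] = 0 ∨ (b ≤ l[j] ∧ ∀ j' (h' : j' < j), l[j']'(Nat.lt_trans h' h) ≤ l[j]))

lemma cond_nil (i b : ℕ) : Cond i b [] := by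
  intro j h
  simp at h

lemma cond_cons {i b v : ℕ} {t : List ℕ} :
    Cond i b (v :: t) ↔
      ((v = 0 ∧ Cond (i+1) b t) ∨ (b ≤ v ∧ v ≤ i ∧ Cond (i+1) v t)) := by
  constructor
  · intro H
    have h0 := H 0 (by simp)
    simp only [List.getElem_cons_zero] at h0
    rcases h0.2 with hv0 | ⟨hbv, _⟩
    · left
      refine ⟨hv0, ?_⟩
      intro j hj
      have hj' : j + 1 < (v :: t).length := by simp; omega
      have := H (j+1) hj'
      simp only [List.getElem_cons_succ] at this
      refine ⟨by omega, ?_⟩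
      rcases this.2 with h | ⟨hb, hall⟩
      · left; exact h
      · right
        refine ⟨hb, ?_⟩
        intro j' hj'lt
        have := hall (j'+1) (by omega)
        simpa only [List.getElem_cons_succ] using this
    · right
      refine ⟨hbv, by omega, ?_⟩
      intro j hj
      have hj' : j + 1 < (v :: t).length := by simp; omega
      have := H (j+1) hj'
      simp only [List.getElem_cons_succ] at this
      refine ⟨by omega, ?_⟩
      rcases this.2 with h | ⟨hb, hall⟩
      · left; exact h
      · right
        have hv := hall 0 (by omega)
        simp only [List.getElem_cons_zero] at hv
        refine ⟨hv, ?_⟩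
        intro j' hj'lt
        have := hall (j'+1) (by omega)
        simpa only [List.getElem_cons_succ] using this
  · intro H
    intro j hj
    cases j with
    | zero =>
      simp only [List.getElem_cons_zero]
      rcases H with ⟨rfl, _⟩ | ⟨hbv, hvi, _⟩
      · exact ⟨by omega, Or.inl rfl⟩
      · refine ⟨by omega, ?_⟩
        rcases Nat.eq_zero_or_pos v with rfl | hv
        · exact Or.inl rfl
        · exact Or.inr ⟨hbv, fun j' hj' => by omega⟩
    | succ j =>
      simp only [List.getElem_cons_succ]
      have hjt : j < t.length := by simp at hj; omega
      rcases H with ⟨rfl, hc⟩ | ⟨hbv, hvi, hc⟩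
      · have := hc j hjt
        refine ⟨by omega, ?_⟩
        rcases this.2 with h | ⟨hb, hall⟩
        · left; exact h
        · right
          refine ⟨hb, ?_⟩
          intro j' hj'
          cases j' with
          | zero => simp only [List.getElem_cons_zero]; omega
          | succ j' =>
            simp only [List.getElem_cons_succ]
            exact hall j' (by omega)
      · have := hc j hjt
        refine ⟨by omega, ?_⟩
        rcases this.2 with h | ⟨hb, hall⟩
        · left; exact h
        · right
          refine ⟨by omega, ?_⟩
          intro j' hj'
          cases j' with
          | zero => simp only [List.getElem_cons_zero]; omega
          | succ j' =>
            simp only [List.getElem_cons_succ]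
            exact hall j' (by omega)

/-- The finset of valid tails. -/
def okSet : ℕ → ℕ → ℕ → Finset (List ℕ)
  | 0, _, _ => {[]}
  | r+1, i, b =>
      ((okSet r (i+1) b).image (List.cons 0)) ∪
      (Finset.Ico b (i+1)).biUnion (fun v => (okSet r (i+1) v).image (List.cons v))

lemma mem_okSet : ∀ (r i b : ℕ) (l : List ℕ),
    l ∈ okSet r i b ↔ (l.length = r ∧ Cond i b l) := by
  intro r
  induction r with
  | zero =>
    intro i b l
    simp only [okSet, Finset.mem_singleton]
    constructor
    · rintro rfl; exact ⟨rfl, cond_nil i b⟩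
    · rintro ⟨hl, _⟩
      exact List.eq_nil_of_length_eq_zero hl
  | succ r IH =>
    intro i b l
    simp only [okSet, Finset.mem_union, Finset.mem_image, Finset.mem_biUnion, Finset.mem_Ico]
    constructor
    · rintro (⟨t, ht, rfl⟩ | ⟨v, ⟨hbv, hvi⟩, t, ht, rfl⟩)
      · obtain ⟨hlen, hc⟩ := (IH (i+1) b t).mp ht
        exact ⟨by simp [hlen], cond_cons.mpr (Or.inl ⟨rfl, hc⟩)⟩
      · obtain ⟨hlen, hc⟩ := (IH (i+1) v t).mp ht
        exact ⟨by simp [hlen], cond_cons.mpr (Or.inr ⟨hbv, by omega, hc⟩)⟩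
    · rintro ⟨hlen, hc⟩
      cases l with
      | nil => simp at hlen
      | cons v t =>
        have hlent : t.length = r := by simpa using hlen
        rcases cond_cons.mp hc with ⟨rfl, hct⟩ | ⟨hbv, hvi, hct⟩
        · exact Or.inl ⟨t, (IH (i+1) b t).mpr ⟨hlent, hct⟩, rfl⟩
        · exact Or.inr ⟨v, ⟨hbv, by omega⟩, t, (IH (i+1) v t).mpr ⟨hlent, hct⟩, rfl⟩

lemma card_okSet : ∀ (r i b : ℕ), 1 ≤ b → b ≤ i →
    (okSet r i b).card = AA r (i - b) := by
  intro r
  induction r with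
  | zero =>
    intro i b _ _
    simp [okSet, AA_base]
  | succ r IH =>
    intro i b hb hbi
    have hdisj : Disjoint ((okSet r (i+1) b).image (List.cons 0))
        ((Finset.Ico b (i+1)).biUnion (fun v => (okSet r (i+1) v).image (List.cons v))) := by
      rw [Finset.disjoint_left]
      intro l hl hr
      simp only [Finset.mem_image, Finset.mem_biUnion, Finset.mem_Ico] at hl hr
      obtain ⟨t, _, rfl⟩ := hl
      obtain ⟨v, ⟨hbv, _⟩, t', _, heq⟩ := hr
      have : v = 0 := by
        have := (List.cons.injEq v t' 0 t).mp heq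
        exact this.1
      omega
    rw [okSet, Finset.card_union_of_disjoint hdisj]
    rw [Finset.card_image_of_injective _ (fun a b h => (List.cons.injEq _ _ _ _).mp h |>.2)]
    rw [Finset.card_biUnion]
    swap
    · intro v hv w hw hvw
      rw [Function.onFun, Finset.disjoint_left]
      intro l hl hr
      simp only [Finset.mem_image] at hl hr
      obtain ⟨t, _, rfl⟩ := hl
      obtain ⟨t', _, heq⟩ := hr
      exact hvw ((List.cons.injEq _ _ _ _).mp heq.symm |>.1)
    have hsum : ∑ v ∈ Finset.Ico b (i+1), ((okSet r (i+1) v).image (List.cons v)).card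
        = ∑ v ∈ Finset.Ico b (i+1), AA r (i + 1 - v) := by
      refine Finset.sum_congr rfl ?_
      intro v hv
      simp only [Finset.mem_Ico] at hv
      rw [Finset.card_image_of_injective _ (fun a b h => (List.cons.injEq _ _ _ _).mp h |>.2)]
      exact IH (i+1) v (by omega) (by omega)
    rw [hsum, IH (i+1) b (by omega) (by omega)]
    have h1 : i + 1 - b = (i - b) + 1 := by omega
    rw [h1]
    have h2 : ∑ v ∈ Finset.Ico b (i+1), AA r (i + 1 - v)
        = ∑ u ∈ range ((i-b)+1), AA r (u+1) := by
      rw [Finset.sum_Ico_eq_sum_range]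
      rw [show i + 1 - b = (i-b)+1 by omega]
      have := Finset.sum_range_reflect (fun u => AA r (u+1)) ((i-b)+1)
      rw [← this]
      refine Finset.sum_congr rfl ?_
      intro w hw
      simp only [Finset.mem_range] at hw
      congr 1
      omega
    rw [h2, AA_rec r (i-b)]

def Good {n : ℕ} (e : Fin n → ℕ) : Prop :=
  ∀ j k : Fin n, j < k → e k = 0 ∨ e j ≤ e k

lemma avoids021_of_good {n : ℕ} (e : Fin n → ℕ) (hg : Good e) : Avoids e [0,2,1] := by
  rintro ⟨s, hs, hc⟩
  have h02 : e (s ⟨0, by norm_num⟩) < e (s ⟨2, by norm_num⟩) :=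
    ((hc ⟨0, by norm_num⟩ ⟨2, by norm_num⟩).1).mp (by norm_num)
  have h21 : e (s ⟨2, by norm_num⟩) < e (s ⟨1, by norm_num⟩) :=
    ((hc ⟨2, by norm_num⟩ ⟨1, by norm_num⟩).1).mp (by norm_num)
  have hlt : s ⟨1, by norm_num⟩ < s ⟨2, by norm_num⟩ := hs (by norm_num [Fin.lt_def])
  rcases hg _ _ hlt with h | h <;> omega

lemma avoids210_of_good {n : ℕ} (e : Fin n → ℕ) (hg : Good e) : Avoids e [2,1,0] := by
  rintro ⟨s, hs, hc⟩
  have h01 : e (s ⟨1, by norm_num⟩) < e (s ⟨0, by norm_num⟩) :=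
    ((hc ⟨1, by norm_num⟩ ⟨0, by norm_num⟩).1).mp (by norm_num)
  have h12 : e (s ⟨2, by norm_num⟩) < e (s ⟨1, by norm_num⟩) :=
    ((hc ⟨2, by norm_num⟩ ⟨1, by norm_num⟩).1).mp (by norm_num)
  have hlt1 : s ⟨1, by norm_num⟩ < s ⟨2, by norm_num⟩ := hs (by norm_num [Fin.lt_def])
  have hlt0 : s ⟨0, by norm_num⟩ < s ⟨1, by norm_num⟩ := hs (by norm_num [Fin.lt_def])
  rcases hg _ _ hlt1 with h | h
  · rcases hg _ _ hlt0 with h' | h' <;> omega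
  · omega

lemma avoids201_of_good {n : ℕ} (e : Fin n → ℕ) (hg : Good e) : Avoids e [2,0,1] := by
  rintro ⟨s, hs, hc⟩
  have h12 : e (s ⟨1, by norm_num⟩) < e (s ⟨2, by norm_num⟩) :=
    ((hc ⟨1, by norm_num⟩ ⟨2, by norm_num⟩).1).mp (by norm_num)
  have h20 : e (s ⟨2, by norm_num⟩) < e (s ⟨0, by norm_num⟩) :=
    ((hc ⟨2, by norm_num⟩ ⟨0, by norm_num⟩).1).mp (by norm_num)
  have hlt : s ⟨0, by norm_num⟩ < s ⟨2, by norm_num⟩ := hs (by norm_num [Fin.lt_def])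
  rcases hg _ _ hlt with h | h <;> omega

lemma good_of_avoids021 {n : ℕ} (e : Fin n → ℕ) (hinv : InvSeq e)
    (hav : Avoids e [0,2,1]) : Good e := by
  intro j k hjk
  by_contra hcon
  push_neg at hcon
  obtain ⟨hk0, hjgt⟩ := hcon
  apply hav
  have hn0 : 0 < n := by
    have := j.isLt; omega
  have hi0 : e ⟨0, hn0⟩ = 0 := by
    have := hinv ⟨0, hn0⟩
    simpa using this
  have hj2 : 2 ≤ (j : ℕ) := by
    have h1 := hinv j
    have h2 := hinv k
    omega
  have hjklt : (j : ℕ) < (k : ℕ) := hjk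
  refine ⟨fun a => if (a : ℕ) = 0 then ⟨0, hn0⟩ else if (a : ℕ) = 1 then j else k, ?_, ?_⟩
  · intro a b hab
    have hab' : (a : ℕ) < (b : ℕ) := hab
    fin_cases a <;> fin_cases b <;>
      first
        | exact absurd hab' (by decide)
        | exact ((by omega : (0:ℕ) < (j:ℕ)) : (⟨0, hn0⟩ : Fin n) < j)
        | exact ((by omega : (0:ℕ) < (k:ℕ)) : (⟨0, hn0⟩ : Fin n) < k)
        | exact hjk
  · intro a b
    fin_cases a <;> fin_cases b
    · exact ⟨⟨fun h => absurd h (by norm_num), fun h => by omega⟩,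
             ⟨fun _ => rfl, fun _ => rfl⟩⟩
    · show ((0:ℕ) < 2 ↔ e ⟨0, hn0⟩ < e j) ∧ ((0:ℕ) = 2 ↔ e ⟨0, hn0⟩ = e j)
      constructor <;> constructor <;> intro h <;> omega
    · show ((0:ℕ) < 1 ↔ e ⟨0, hn0⟩ < e k) ∧ ((0:ℕ) = 1 ↔ e ⟨0, hn0⟩ = e k)
      constructor <;> constructor <;> intro h <;> omega
    · show ((2:ℕ) < 0 ↔ e j < e ⟨0, hn0⟩) ∧ ((2:ℕ) = 0 ↔ e j = e ⟨0, hn0⟩)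
      constructor <;> constructor <;> intro h <;> omega
    · exact ⟨⟨fun h => absurd h (by norm_num), fun h => by omega⟩,
             ⟨fun _ => rfl, fun _ => rfl⟩⟩
    · show ((2:ℕ) < 1 ↔ e j < e k) ∧ ((2:ℕ) = 1 ↔ e j = e k)
      constructor <;> constructor <;> intro h <;> omega
    · show ((1:ℕ) < 0 ↔ e k < e ⟨0, hn0⟩) ∧ ((1:ℕ) = 0 ↔ e k = e ⟨0, hn0⟩)
      constructor <;> constructor <;> intro h <;> omega
    · show ((1:ℕ) < 2 ↔ e k < e j) ∧ ((1:ℕ) = 2 ↔ e k = e j)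
      constructor <;> constructor <;> intro h <;> omega
    · exact ⟨⟨fun h => absurd h (by norm_num), fun h => by omega⟩,
             ⟨fun _ => rfl, fun _ => rfl⟩⟩

noncomputable def mainEquiv (m : ℕ) :
    {e : Fin (m+1) → ℕ // InvSeq e ∧ Good e} ≃ {l : List ℕ // l ∈ okSet m 1 1} where
  toFun e := ⟨List.ofFn (fun j : Fin m => e.1 j.succ), by
    obtain ⟨hinv, hg⟩ := e.2
    rw [mem_okSet]
    refine ⟨by simp, ?_⟩
    intro j hj
    have hj' : j < m := by simpa using hj
    rw [List.getElem_ofFn]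
    constructor
    · calc e.1 (Fin.succ ⟨j, by simpa using hj⟩)
          ≤ ((Fin.succ ⟨j, by simpa using hj⟩ : Fin (m+1)) : ℕ) := hinv _
        _ = j + 1 := by simp
        _ ≤ 1 + j := by omega
    · by_cases h0 : e.1 (Fin.succ ⟨j, by simpa using hj⟩) = 0
      · left
        exact h0
      · right
        refine ⟨by omega, ?_⟩
        intro j' hj'lt
        rw [List.getElem_ofFn]
        have hlt : (Fin.succ ⟨j', by simp at hj ⊢; omega⟩ : Fin (m+1)) < Fin.succ ⟨j, by simpa using hj⟩ := by
          simp only [Fin.lt_def, Fin.val_succ]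
          omega
        rcases hg _ _ hlt with h | h
        · exact absurd h h0
        · exact h⟩
  invFun l := ⟨fun idx => if h : (idx : ℕ) = 0 then 0 else
      l.1[(idx : ℕ) - 1]'(by
        have hlen := ((mem_okSet m 1 1 l.1).mp l.2).1
        have := idx.isLt
        omega), by
    have hlen := ((mem_okSet m 1 1 l.1).mp l.2).1
    have hcond := ((mem_okSet m 1 1 l.1).mp l.2).2
    constructor
    · intro idx
      by_cases h : (idx : ℕ) = 0
      · simp [h]
      · simp only [dif_neg h]
        have hb := (hcond ((idx : ℕ) - 1) (by have := idx.isLt; omega)).1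
        omega
    · intro a b hab
      have hva : (a : ℕ) < (b : ℕ) := hab
      have hb0 : (b : ℕ) ≠ 0 := by omega
      simp only [dif_neg hb0]
      have hcb := (hcond ((b : ℕ) - 1) (by have := b.isLt; omega)).2
      rcases hcb with h | ⟨h1, hall⟩
      · left; exact h
      · right
        by_cases ha0 : (a : ℕ) = 0
        · simp [ha0]
        · simp only [dif_neg ha0]
          exact hall ((a : ℕ) - 1) (by omega)⟩
  left_inv e := by
    apply Subtype.ext
    funext idx
    simp only
    by_cases h : (idx : ℕ) = 0
    · rw [dif_pos h]
      have := e.2.1 idx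
      omega
    · rw [dif_neg h]
      rw [List.getElem_ofFn]
      have harg : (Fin.succ ⟨(idx : ℕ) - 1, by have := idx.isLt; omega⟩ : Fin (m+1)) = idx := by
        apply Fin.ext
        simp only [Fin.val_succ]
        omega
      exact congrArg e.1 harg
  right_inv l := by
    apply Subtype.ext
    simp only
    have hlen := ((mem_okSet m 1 1 l.1).mp l.2).1
    apply List.ext_getElem
    · simp [hlen]
    · intro j h1 h2
      rw [List.getElem_ofFn]
      rw [dif_neg (by simp)]
      simp


theorem stmt_8 (n : ℕ) (hn : 1 ≤ n) (p q : List ℕ)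
    (hpq : (p, q) = ([0,2,1], [2,1,0]) ∨ (p, q) = ([0,2,1], [2,0,1])) :
    (∀ e : Fin n → ℕ,
      (InvSeq e ∧ Avoids e p ∧ Avoids e q) ↔ (InvSeq e ∧ Avoids e [0,2,1])) ∧
    Nat.card {e : Fin n → ℕ // InvSeq e ∧ Avoids e p ∧ Avoids e q}
      = ∑ k ∈ Finset.range n, Nat.choose (n - 1 + k) (2 * k) * catalan k := by
  have hq : ∀ e : Fin n → ℕ, Good e → Avoids e q := by
    rcases hpq with h | h <;> (simp only [Prod.mk.injEq] at h; obtain ⟨rfl, rfl⟩ := h)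
    · exact fun e hg => avoids210_of_good e hg
    · exact fun e hg => avoids201_of_good e hg
  have hp : p = [0,2,1] := by
    rcases hpq with h | h <;> (simp only [Prod.mk.injEq] at h; exact h.1)
  subst hp
  have hiff : ∀ e : Fin n → ℕ,
      (InvSeq e ∧ Avoids e [0,2,1] ∧ Avoids e q) ↔ (InvSeq e ∧ Good e) := by
    intro e
    constructor
    · rintro ⟨h1, h2, _⟩
      exact ⟨h1, good_of_avoids021 e h1 h2⟩
    · rintro ⟨h1, h2⟩
      exact ⟨h1, avoids021_of_good e h2, hq e h2⟩
  constructor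
  · intro e
    constructor
    · rintro ⟨h1, h2, _⟩
      exact ⟨h1, h2⟩
    · rintro ⟨h1, h2⟩
      exact ⟨h1, h2, hq e (good_of_avoids021 e h1 h2)⟩
  · obtain ⟨m, rfl⟩ : ∃ m, n = m + 1 := ⟨n - 1, by omega⟩
    rw [Nat.card_congr (Equiv.subtypeEquivRight hiff)]
    rw [Nat.card_congr (mainEquiv m)]
    rw [Nat.card_eq_fintype_card, Fintype.card_coe]
    rw [card_okSet m 1 1 (le_refl 1) (le_refl 1)]
    rw [show (1:ℕ) - 1 = 0 from rfl]
    rw [AA_final m]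
    refine Finset.sum_congr rfl ?_
    intro k _
    congr 2 <;> omega
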